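/- Under the symmetric equilibrium β with c(β(v)) = Σ_{k=1}^{I-1}(M_k − M_{k+1}) ∫_{v_low}^v t f_{k:I-1}(t) dt, the expected utility of a bidder with valuation v equals u(v) = ∫_{v_low}^{v} Σ_{k=1}^{I} (F_{k:I-1}(t) − F_{k-1:I-1}(t)) M_k dt ≥ 0, so in particular u(v_low) = 0 and u is nondecreasing in v. -/

import Mathlib

open MeasureTheory intervalIntegral

/-- Under the symmetric equilibrium `c(β(v)) = Σ_{k=1}^{I-1}(M_k - M_{k+1}) ∫_{vlow}^v t f_{k:I-1}`,
the equilibrium utility `u(v) = v Σ_{k=1}^I (F_{k:I-1}(v) - F_{k-1:I-1}(v)) M_k - c(β(v))`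
equals `∫_{vlow}^v Σ_{k=1}^I (F_{k:I-1}(t) - F_{k-1:I-1}(t)) M_k dt`; in particular
`u(vlow) = 0`, `u` is nondecreasing and nonnegative on `[vlow, vhigh]`. -/
theorem stmt6 (I : ℕ) (hI : 2 ≤ I) (vlow vhigh : ℝ) (hv : vlow < vhigh) (hvl : 0 ≤ vlow)
    (M : ℕ → ℝ) (hM : ∀ k ∈ Finset.Icc 1 (I - 1), M (k + 1) ≤ M k)
    (hMnn : ∀ k, 0 ≤ M k) (hMI : M I = 0)
    (F f : ℕ → ℝ → ℝ)
    (hF0 : ∀ v, F 0 v = 0) (hFI : ∀ v, F I v = 1)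
    (hf0 : ∀ v, f 0 v = 0) (hfI : ∀ v, f I v = 0)
    (hFlow : ∀ k ∈ Finset.Icc 1 (I - 1), F k vlow = 0)
    (hFderiv : ∀ k ∈ Finset.Icc 1 (I - 1), ∀ v ∈ Set.Icc vlow vhigh,
      HasDerivAt (F k) (f k v) v)
    (hfc : ∀ k ∈ Finset.Icc 1 (I - 1), ContinuousOn (f k) (Set.Icc vlow vhigh))
    (hFmono : ∀ k ∈ Finset.Icc 1 I, ∀ v ∈ Set.Icc vlow vhigh, F (k - 1) v ≤ F k v)
    (c β u : ℝ → ℝ)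
    (heq : ∀ v ∈ Set.Icc vlow vhigh,
      c (β v) = ∑ k ∈ Finset.Icc 1 (I - 1), (M k - M (k + 1)) * ∫ t in vlow..v, t * f k t)
    (hu : ∀ v, u v = v * (∑ k ∈ Finset.Icc 1 I, (F k v - F (k - 1) v) * M k) - c (β v)) :
    (∀ v ∈ Set.Icc vlow vhigh,
      u v = ∫ t in vlow..v, ∑ k ∈ Finset.Icc 1 I, (F k t - F (k - 1) t) * M k)
    ∧ u vlow = 0
    ∧ MonotoneOn u (Set.Icc vlow vhigh)
    ∧ (∀ v ∈ Set.Icc vlow vhigh, 0 ≤ u v) := by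
  have hI1 : I - 1 + 1 = I := Nat.succ_pred_eq_of_pos (by omega : 0 < I)
  -- Abel summation identity
  have abel : ∀ v : ℝ, ∑ k ∈ Finset.Icc 1 I, (F k v - F (k - 1) v) * M k
      = ∑ k ∈ Finset.Icc 1 (I - 1), (M k - M (k + 1)) * F k v := by
    intro v
    have h1 : ∑ k ∈ Finset.Icc 1 I, F k v * M k
        = ∑ k ∈ Finset.Icc 1 (I - 1), F k v * M k := by
      rw [← hI1, Finset.sum_Icc_succ_top (by omega : 1 ≤ I - 1 + 1)]
      simp [hI1, hMI]
    have h2 : ∑ k ∈ Finset.Icc 1 I, F (k - 1) v * M k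
        = ∑ k ∈ Finset.Icc 1 (I - 1), F k v * M (k + 1) := by
      have hmap : Finset.Icc 1 I = (Finset.Icc 0 (I - 1)).map (addRightEmbedding 1) := by
        rw [Finset.map_add_right_Icc]
        congr 1
        omega
      rw [hmap, Finset.sum_map]
      simp only [addRightEmbedding_apply, Nat.add_sub_cancel]
      have hins : Finset.Icc 0 (I - 1) = insert 0 (Finset.Icc 1 (I - 1)) := by
        ext j
        simp only [Finset.mem_Icc, Finset.mem_insert]
        omega
      rw [hins, Finset.sum_insert (by simp)]
      simp [hF0]
    simp only [sub_mul]
    rw [Finset.sum_sub_distrib, h1, h2, ← Finset.sum_sub_distrib]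
    exact Finset.sum_congr rfl fun k _ => by ring
  have hFcont : ∀ k ∈ Finset.Icc 1 (I - 1), ContinuousOn (F k) (Set.Icc vlow vhigh) :=
    fun k hk v hv' => (hFderiv k hk v hv').continuousAt.continuousWithinAt
  -- integration by parts for each k
  have key : ∀ k ∈ Finset.Icc 1 (I - 1), ∀ v ∈ Set.Icc vlow vhigh,
      v * F k v - (∫ t in vlow..v, t * f k t) = ∫ t in vlow..v, F k t := by
    intro k hk v hv'
    obtain ⟨hv1, hv2⟩ := hv'
    have hsub : Set.uIcc vlow v ⊆ Set.Icc vlow vhigh := by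
      rw [Set.uIcc_of_le hv1]; exact Set.Icc_subset_Icc le_rfl hv2
    have hderiv : ∀ t ∈ Set.uIcc vlow v,
        HasDerivAt (fun t => t * F k t) (F k t + t * f k t) t := by
      intro t ht
      have : HasDerivAt (fun t => t * F k t) (1 * F k t + t * f k t) t := (hasDerivAt_id' t).mul (hFderiv k hk t (hsub ht))
      simpa [add_comm] using this
    have hcF : ContinuousOn (F k) (Set.uIcc vlow v) := (hFcont k hk).mono hsub
    have hcf : ContinuousOn (fun t => t * f k t) (Set.uIcc vlow v) :=
      continuousOn_id.mul ((hfc k hk).mono hsub)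
    have hcont : ContinuousOn (fun t => F k t + t * f k t) (Set.uIcc vlow v) :=
      hcF.add hcf
    have hibp := intervalIntegral.integral_eq_sub_of_hasDerivAt hderiv
      (hcont.intervalIntegrable)
    rw [intervalIntegral.integral_add hcF.intervalIntegrable hcf.intervalIntegrable] at hibp
    rw [hFlow k hk] at hibp
    simp only [mul_zero, sub_zero] at hibp
    linarith
  -- main formula
  have main : ∀ v ∈ Set.Icc vlow vhigh,
      u v = ∫ t in vlow..v, ∑ k ∈ Finset.Icc 1 I, (F k t - F (k - 1) t) * M k := by
    intro v hv'
    obtain ⟨hv1, hv2⟩ := hv'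
    have hsub : Set.uIcc vlow v ⊆ Set.Icc vlow vhigh := by
      rw [Set.uIcc_of_le hv1]; exact Set.Icc_subset_Icc le_rfl hv2
    rw [hu, heq v ⟨hv1, hv2⟩, abel v]
    have step1 : v * (∑ k ∈ Finset.Icc 1 (I - 1), (M k - M (k + 1)) * F k v)
        - ∑ k ∈ Finset.Icc 1 (I - 1), (M k - M (k + 1)) * ∫ t in vlow..v, t * f k t
        = ∑ k ∈ Finset.Icc 1 (I - 1), (M k - M (k + 1)) * ∫ t in vlow..v, F k t := by
      rw [Finset.mul_sum, ← Finset.sum_sub_distrib]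
      refine Finset.sum_congr rfl fun k hk => ?_
      rw [← key k hk v ⟨hv1, hv2⟩]; ring
    rw [step1]
    have step2 : ∑ k ∈ Finset.Icc 1 (I - 1), (M k - M (k + 1)) * ∫ t in vlow..v, F k t
        = ∫ t in vlow..v, ∑ k ∈ Finset.Icc 1 (I - 1), (M k - M (k + 1)) * F k t := by
      rw [intervalIntegral.integral_finset_sum]
      · exact Finset.sum_congr rfl fun k hk => (intervalIntegral.integral_const_mul _ _).symm
      · intro k hk
        exact (continuousOn_const.mul ((hFcont k hk).mono hsub)).intervalIntegrable
    rw [step2]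
    exact (intervalIntegral.integral_congr fun t _ => (abel t)).symm
  have hvlowmem : vlow ∈ Set.Icc vlow vhigh := ⟨le_rfl, hv.le⟩
  have hulow : u vlow = 0 := by
    rw [main vlow hvlowmem, intervalIntegral.integral_same]
  -- continuity of the integrand on Icc
  have hFcont' : ∀ k, k ≤ I → ContinuousOn (F k) (Set.Icc vlow vhigh) := by
    intro k hk
    rcases Nat.eq_zero_or_pos k with rfl | hk0
    · have : F 0 = fun _ => (0 : ℝ) := funext hF0
      rw [this]; exact continuousOn_const
    rcases eq_or_lt_of_le hk with rfl | hkI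
    · have : F k = fun _ => (1 : ℝ) := funext hFI
      rw [this]; exact continuousOn_const
    · exact hFcont k (Finset.mem_Icc.mpr ⟨hk0, by omega⟩)
  have hhcont : ContinuousOn
      (fun t => ∑ k ∈ Finset.Icc 1 I, (F k t - F (k - 1) t) * M k)
      (Set.Icc vlow vhigh) := by
    apply continuousOn_finset_sum
    intro k hk
    have hk' := Finset.mem_Icc.mp hk
    exact ((hFcont' k hk'.2).sub (hFcont' (k - 1) (by omega))).mul continuousOn_const
  have hhnn : ∀ t ∈ Set.Icc vlow vhigh,
      0 ≤ ∑ k ∈ Finset.Icc 1 I, (F k t - F (k - 1) t) * M k := by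
    intro t ht
    refine Finset.sum_nonneg fun k hk => mul_nonneg ?_ (hMnn k)
    exact sub_nonneg.mpr (hFmono k hk t ht)
  have hmono : MonotoneOn u (Set.Icc vlow vhigh) := by
    intro a ha b hb hab
    rw [main a ha, main b hb]
    have hsub1 : Set.uIcc vlow a ⊆ Set.Icc vlow vhigh := by
      rw [Set.uIcc_of_le ha.1]; exact Set.Icc_subset_Icc le_rfl ha.2
    have hsub2 : Set.uIcc a b ⊆ Set.Icc vlow vhigh := by
      rw [Set.uIcc_of_le hab]; exact Set.Icc_subset_Icc ha.1 hb.2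
    have hint1 := (hhcont.mono hsub1).intervalIntegrable (μ := volume)
    have hint2 := (hhcont.mono hsub2).intervalIntegrable (μ := volume)
    have hsplit := intervalIntegral.integral_add_adjacent_intervals hint1 hint2
    rw [← hsplit]
    have hpos : 0 ≤ ∫ t in a..b, ∑ k ∈ Finset.Icc 1 I, (F k t - F (k - 1) t) * M k := by
      apply intervalIntegral.integral_nonneg hab
      intro t ht
      exact hhnn t ⟨le_trans ha.1 ht.1, le_trans ht.2 hb.2⟩
    linarith
  refine ⟨main, hulow, hmono, fun v hv' => ?_⟩
  have := hmono hvlowmem hv' hv'.1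
  linarith [hulow]
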